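/- For all real z and all A' with 0 \le A' \le 1/8, one has 0 \le 1 - 4A'(1 - cos z), and \sqrt{1 - 4A'(1-\cos z)} \le \exp(-A' z^2 + (1/12) A' z^4). -/

import Mathlib

open Real

private lemma sin_ge_aux {x : ℝ} (hx : 0 ≤ x) : x - x ^ 3 / 6 ≤ Real.sin x := by
  have h : ∀ y ∈ Set.Ici (0:ℝ), 0 ≤ deriv (fun t => Real.sin t - (t - t ^ 3 / 6)) y := by
    intro y _
    have : deriv (fun t => Real.sin t - (t - t ^ 3 / 6)) y
        = Real.cos y - (1 - y ^ 2 / 2) := by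
      have h1 : HasDerivAt (fun t : ℝ => Real.sin t - (t - t ^ 3 / 6))
          (Real.cos y - (1 - 3 * y ^ 2 / 6)) y := by
        have := ((Real.hasDerivAt_sin y).sub
          ((hasDerivAt_id y).sub (((hasDerivAt_pow 3 y).div_const 6))))
        exact this.congr_deriv (by norm_num)
      rw [h1.deriv]; ring
    rw [this]
    linarith [Real.one_sub_sq_div_two_le_cos (x := y)]
  have hmono : MonotoneOn (fun t => Real.sin t - (t - t ^ 3 / 6)) (Set.Ici (0:ℝ)) := by
    apply monotoneOn_of_deriv_nonneg (convex_Ici 0)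
    · exact (Real.continuous_sin.sub (continuous_id.sub
        ((continuous_pow 3).div_const 6))).continuousOn
    · intro y hy
      exact ((Real.differentiable_sin.sub
        (differentiable_id.sub ((differentiable_pow 3).div_const 6))) y).differentiableWithinAt
    · intro y hy; exact h y (interior_subset hy)
  have := hmono (Set.self_mem_Ici) hx hx
  simp at this
  linarith

private lemma cos_le_quartic (x : ℝ) : Real.cos x ≤ 1 - x ^ 2 / 2 + x ^ 4 / 24 := by
  wlog hx : 0 ≤ x with H
  · have := H (-x) (by linarith)
    rw [← Real.cos_neg]
    have h4 : (-x) ^ 4 = x ^ 4 := by ring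
    linarith [h4 ▸ this]
  have h : ∀ y ∈ Set.Ici (0:ℝ), 0 ≤ deriv (fun t => 1 - t ^ 2 / 2 + t ^ 4 / 24 - Real.cos t) y := by
    intro y hy
    have h1 : HasDerivAt (fun t : ℝ => 1 - t ^ 2 / 2 + t ^ 4 / 24 - Real.cos t)
        ((0 - 2 * y / 2 + 4 * y ^ 3 / 24) - (-Real.sin y)) y := by
      have := (((hasDerivAt_const y (1:ℝ)).sub ((hasDerivAt_pow 2 y).div_const 2)).add
        ((hasDerivAt_pow 4 y).div_const 24)).sub (Real.hasDerivAt_cos y)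
      exact this.congr_deriv (by norm_num)
    rw [h1.deriv]
    have := sin_ge_aux (Set.mem_Ici.mp hy)
    nlinarith
  have hmono : MonotoneOn (fun t => 1 - t ^ 2 / 2 + t ^ 4 / 24 - Real.cos t) (Set.Ici (0:ℝ)) := by
    apply monotoneOn_of_deriv_nonneg (convex_Ici 0)
    · exact (((continuous_const.sub ((continuous_pow 2).div_const 2)).add
        ((continuous_pow 4).div_const 24)).sub Real.continuous_cos).continuousOn
    · intro y hy
      exact ((((differentiable_const _).sub ((differentiable_pow 2).div_const 2)).add
        ((differentiable_pow 4).div_const 24)).sub Real.differentiable_cos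
        |>.differentiableAt).differentiableWithinAt
    · intro y hy; exact h y (interior_subset hy)
  have := hmono (Set.self_mem_Ici) hx hx
  simp at this
  linarith

theorem sqrt_integrand_bound (z A' : ℝ) (h0 : 0 ≤ A') (h8 : A' ≤ 1/8) :
    0 ≤ 1 - 4 * A' * (1 - Real.cos z) ∧
    Real.sqrt (1 - 4 * A' * (1 - Real.cos z)) ≤
      Real.exp (-A' * z ^ 2 + (1/12) * A' * z ^ 4) := by
  have hc1 : Real.cos z ≤ 1 := Real.cos_le_one z
  have hc2 : -1 ≤ Real.cos z := Real.neg_one_le_cos z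
  have hx0 : 0 ≤ 4 * A' * (1 - Real.cos z) := by nlinarith
  have hnn : 0 ≤ 1 - 4 * A' * (1 - Real.cos z) := by nlinarith
  refine ⟨hnn, ?_⟩
  -- sqrt(1-x) ≤ exp(-x/2)
  have h1 : 1 - 4 * A' * (1 - Real.cos z) ≤ Real.exp (-(4 * A' * (1 - Real.cos z))) := by
    linarith [Real.add_one_le_exp (-(4 * A' * (1 - Real.cos z)))]
  have h2 : Real.sqrt (1 - 4 * A' * (1 - Real.cos z))
      ≤ Real.exp (-(2 * A' * (1 - Real.cos z))) := by
    rw [show -(2 * A' * (1 - Real.cos z)) = -(4 * A' * (1 - Real.cos z)) / 2 by ring,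
      Real.exp_half]
    exact Real.sqrt_le_sqrt h1
  refine h2.trans (Real.exp_le_exp.mpr ?_)
  have := cos_le_quartic z
  nlinarith
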